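/- Let θ ∈ (−π, π] with θ ≠ π, γ = exp(iθ/2). Then there do not exist unit vectors φ, ψ ∈ ℂ⁴ such that ⟨ψ|M|φ⟩ = 0 and ⟨φ|M|φ⟩ = ⟨ψ|M|ψ⟩ for all M ∈ 𝔏_θ. -/
import Mathlib


open Matrix Complex Finset

def Lset (θ : ℝ) : Set (Matrix (Fin 4) (Fin 4) ℂ) :=
  {M | ∃ a b c d : ℂ,
    M = !![a, b, Complex.exp (Complex.I * θ / 2) * c, d;
           b, a, d, (starRingEnd ℂ) (Complex.exp (Complex.I * θ / 2)) * c;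
           (starRingEnd ℂ) (Complex.exp (Complex.I * θ / 2)) * c, d, a, b;
           d, Complex.exp (Complex.I * θ / 2) * c, b, a]}

private lemma cms (z : ℂ) : (starRingEnd ℂ) z * z = (Complex.normSq z : ℂ) := by
  rw [mul_comm, Complex.mul_conj]

private lemma block_aux (a b x y : ℂ)
    (h1 : (starRingEnd ℂ) a * x + (starRingEnd ℂ) b * y = 0)
    (h2 : (starRingEnd ℂ) x * x + (starRingEnd ℂ) y * y
        = (starRingEnd ℂ) a * a + (starRingEnd ℂ) b * b) :
    (starRingEnd ℂ) a * b = -((starRingEnd ℂ) x * y)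
      ∧ Complex.normSq a = Complex.normSq y ∧ Complex.normSq b = Complex.normSq x := by
  have hsum : Complex.normSq x + Complex.normSq y = Complex.normSq a + Complex.normSq b := by
    have h2' := h2
    rw [cms, cms, cms, cms] at h2'
    exact_mod_cast h2'
  have hprod : Complex.normSq a * Complex.normSq x = Complex.normSq b * Complex.normSq y := by
    have h1' : (starRingEnd ℂ) a * x = -((starRingEnd ℂ) b * y) := by linear_combination h1
    have h1'' := congrArg Complex.normSq h1'
    simpa [Complex.normSq_mul, Complex.normSq_conj] using h1''
  have h3 : (Complex.normSq a - Complex.normSq y) * (Complex.normSq x + Complex.normSq y) = 0 := by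
    linear_combination hprod - Complex.normSq y * hsum
  have h4 : Complex.normSq a = Complex.normSq y ∧ Complex.normSq b = Complex.normSq x := by
    rcases mul_eq_zero.mp h3 with h | h
    · constructor <;> linarith
    · have hx0 : Complex.normSq x = 0 := by
        nlinarith [Complex.normSq_nonneg x, Complex.normSq_nonneg y]
      have hy0 : Complex.normSq y = 0 := by
        nlinarith [Complex.normSq_nonneg x, Complex.normSq_nonneg y]
      have ha0 : Complex.normSq a = 0 := by
        nlinarith [Complex.normSq_nonneg a, Complex.normSq_nonneg b]
      have hb0 : Complex.normSq b = 0 := by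
        nlinarith [Complex.normSq_nonneg a, Complex.normSq_nonneg b]
      rw [hx0, hy0, ha0, hb0]; exact ⟨rfl, rfl⟩
  obtain ⟨hA, hBx⟩ := h4
  refine ⟨?_, hA, hBx⟩
  by_cases hx : x = 0
  · have hb : b = 0 := by
      have : Complex.normSq b = 0 := by rw [hBx, hx]; simp
      exact Complex.normSq_eq_zero.mp this
    simp [hx, hb]
  · have hbx : (starRingEnd ℂ) b * b = (starRingEnd ℂ) x * x := by
      rw [cms, cms, hBx]
    have key : x * ((starRingEnd ℂ) a * b) = x * (-((starRingEnd ℂ) x * y)) := by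
      linear_combination b * h1 - y * hbx
    exact mul_left_cancel₀ hx key

private lemma core (c s : ℝ) (hc : 0 < c) (x1 y1 x2 y2 a1 b1 a2 b2 : ℂ)
    (hI : (starRingEnd ℂ) a1 * x1 + (starRingEnd ℂ) b1 * y1
        + (starRingEnd ℂ) a2 * x2 + (starRingEnd ℂ) b2 * y2 = 0)
    (hD : ((starRingEnd ℂ) a1 * x1 + (starRingEnd ℂ) b1 * y1)
        - ((starRingEnd ℂ) a2 * x2 + (starRingEnd ℂ) b2 * y2) = 0)
    (hB : ((starRingEnd ℂ) a1 * x1 - (starRingEnd ℂ) b1 * y1)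
        - ((starRingEnd ℂ) a2 * x2 - (starRingEnd ℂ) b2 * y2) = 0)
    (hC : (c : ℂ) * ((starRingEnd ℂ) a1 * x1 - (starRingEnd ℂ) b1 * y1)
        + (s : ℂ) * Complex.I * ((starRingEnd ℂ) b1 * x1 - (starRingEnd ℂ) a1 * y1)
        + (c : ℂ) * ((starRingEnd ℂ) a2 * x2 - (starRingEnd ℂ) b2 * y2)
        + (s : ℂ) * Complex.I * ((starRingEnd ℂ) b2 * x2 - (starRingEnd ℂ) a2 * y2) = 0)
    (nI : (starRingEnd ℂ) x1 * x1 + (starRingEnd ℂ) y1 * y1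
        + (starRingEnd ℂ) x2 * x2 + (starRingEnd ℂ) y2 * y2
        = (starRingEnd ℂ) a1 * a1 + (starRingEnd ℂ) b1 * b1
        + (starRingEnd ℂ) a2 * a2 + (starRingEnd ℂ) b2 * b2)
    (nD : ((starRingEnd ℂ) x1 * x1 + (starRingEnd ℂ) y1 * y1)
        - ((starRingEnd ℂ) x2 * x2 + (starRingEnd ℂ) y2 * y2)
        = ((starRingEnd ℂ) a1 * a1 + (starRingEnd ℂ) b1 * b1)
        - ((starRingEnd ℂ) a2 * a2 + (starRingEnd ℂ) b2 * b2))
    (nB : ((starRingEnd ℂ) x1 * x1 - (starRingEnd ℂ) y1 * y1)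
        - ((starRingEnd ℂ) x2 * x2 - (starRingEnd ℂ) y2 * y2)
        = ((starRingEnd ℂ) a1 * a1 - (starRingEnd ℂ) b1 * b1)
        - ((starRingEnd ℂ) a2 * a2 - (starRingEnd ℂ) b2 * b2))
    (nC : (c : ℂ) * ((starRingEnd ℂ) x1 * x1 - (starRingEnd ℂ) y1 * y1)
        + (s : ℂ) * Complex.I * ((starRingEnd ℂ) y1 * x1 - (starRingEnd ℂ) x1 * y1)
        + (c : ℂ) * ((starRingEnd ℂ) x2 * x2 - (starRingEnd ℂ) y2 * y2)
        + (s : ℂ) * Complex.I * ((starRingEnd ℂ) y2 * x2 - (starRingEnd ℂ) x2 * y2)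
        = (c : ℂ) * ((starRingEnd ℂ) a1 * a1 - (starRingEnd ℂ) b1 * b1)
        + (s : ℂ) * Complex.I * ((starRingEnd ℂ) b1 * a1 - (starRingEnd ℂ) a1 * b1)
        + (c : ℂ) * ((starRingEnd ℂ) a2 * a2 - (starRingEnd ℂ) b2 * b2)
        + (s : ℂ) * Complex.I * ((starRingEnd ℂ) b2 * a2 - (starRingEnd ℂ) a2 * b2)) :
    x1 = 0 ∧ y1 = 0 ∧ x2 = 0 ∧ y2 = 0 := by
  have hO1 : (starRingEnd ℂ) a1 * x1 + (starRingEnd ℂ) b1 * y1 = 0 := by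
    linear_combination (hI + hD) / 2
  have hO2 : (starRingEnd ℂ) a2 * x2 + (starRingEnd ℂ) b2 * y2 = 0 := by
    linear_combination (hI - hD) / 2
  have hN1 : (starRingEnd ℂ) x1 * x1 + (starRingEnd ℂ) y1 * y1
      = (starRingEnd ℂ) a1 * a1 + (starRingEnd ℂ) b1 * b1 := by
    linear_combination (nI + nD) / 2
  have hN2 : (starRingEnd ℂ) x2 * x2 + (starRingEnd ℂ) y2 * y2
      = (starRingEnd ℂ) a2 * a2 + (starRingEnd ℂ) b2 * b2 := by
    linear_combination (nI - nD) / 2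
  obtain ⟨hF1, hF2, hF3⟩ := block_aux a1 b1 x1 y1 hO1 hN1
  obtain ⟨hG1, hG2, hG3⟩ := block_aux a2 b2 x2 y2 hO2 hN2
  -- complex versions of the normSq equalities
  have hF2c : (starRingEnd ℂ) a1 * a1 = (starRingEnd ℂ) y1 * y1 := by rw [cms, cms, hF2]
  have hF3c : (starRingEnd ℂ) b1 * b1 = (starRingEnd ℂ) x1 * x1 := by rw [cms, cms, hF3]
  have hG2c : (starRingEnd ℂ) a2 * a2 = (starRingEnd ℂ) y2 * y2 := by rw [cms, cms, hG2]
  have hG3c : (starRingEnd ℂ) b2 * b2 = (starRingEnd ℂ) x2 * x2 := by rw [cms, cms, hG3]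
  -- conjugated versions of hF1, hG1
  have hF1c : a1 * (starRingEnd ℂ) b1 = -(x1 * (starRingEnd ℂ) y1) := by
    have h' := congrArg (starRingEnd ℂ) hF1
    simp only [_root_.map_mul, map_neg, Complex.conj_conj] at h'
    linear_combination h'
  have hG1c : a2 * (starRingEnd ℂ) b2 = -(x2 * (starRingEnd ℂ) y2) := by
    have h' := congrArg (starRingEnd ℂ) hG1
    simp only [_root_.map_mul, map_neg, Complex.conj_conj] at h'
    linear_combination h'
  -- equal off-diagonal "T" in the two blocks
  have hT : (starRingEnd ℂ) b2 * y2 = (starRingEnd ℂ) b1 * y1 := by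
    linear_combination (hB - hO1 + hO2) / 2
  have hTc : b2 * (starRingEnd ℂ) y2 = b1 * (starRingEnd ℂ) y1 := by
    have h' := congrArg (starRingEnd ℂ) hT
    simp only [_root_.map_mul, Complex.conj_conj] at h'
    linear_combination h'
  have hE : (s : ℂ) * Complex.I * (((starRingEnd ℂ) b1 * x1 - (starRingEnd ℂ) a1 * y1)
      + ((starRingEnd ℂ) b2 * x2 - (starRingEnd ℂ) a2 * y2))
      = 4 * (c : ℂ) * ((starRingEnd ℂ) b1 * y1) := by
    linear_combination hC - (c : ℂ) * hO1 - (c : ℂ) * hO2 + 2 * (c : ℂ) * hT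
  have hEc : -((s : ℂ) * Complex.I * ((b1 * (starRingEnd ℂ) x1 - a1 * (starRingEnd ℂ) y1)
      + (b2 * (starRingEnd ℂ) x2 - a2 * (starRingEnd ℂ) y2)))
      = 4 * (c : ℂ) * (b1 * (starRingEnd ℂ) y1) := by
    have h' := congrArg (starRingEnd ℂ) hE
    simp only [_root_.map_mul, map_add, map_sub, map_ofNat, Complex.conj_conj, Complex.conj_I,
      Complex.conj_ofReal] at h'
    linear_combination h'
  have hd : (starRingEnd ℂ) x2 * x2 - (starRingEnd ℂ) y2 * y2
      = (starRingEnd ℂ) x1 * x1 - (starRingEnd ℂ) y1 * y1 := by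
    linear_combination (-nB - hF2c + hF3c + hG2c - hG3c) / 2
  have hm : 2 * (c : ℂ) * ((starRingEnd ℂ) x1 * x1 - (starRingEnd ℂ) y1 * y1)
      = (s : ℂ) * Complex.I * (((starRingEnd ℂ) x1 * y1 - x1 * (starRingEnd ℂ) y1)
        + ((starRingEnd ℂ) x2 * y2 - x2 * (starRingEnd ℂ) y2)) := by
    linear_combination (nC + (c : ℂ) * hF2c - (c : ℂ) * hF3c + (c : ℂ) * hG2c - (c : ℂ) * hG3c
      - (s : ℂ) * Complex.I * hF1 + (s : ℂ) * Complex.I * hF1c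
      - (s : ℂ) * Complex.I * hG1 + (s : ℂ) * Complex.I * hG1c
      - 2 * (c : ℂ) * hd) / 2
  have hI1 : (b1 * (starRingEnd ℂ) x1 - a1 * (starRingEnd ℂ) y1) * ((starRingEnd ℂ) b1 * y1)
      - ((starRingEnd ℂ) b1 * x1 - (starRingEnd ℂ) a1 * y1) * (b1 * (starRingEnd ℂ) y1)
      = ((starRingEnd ℂ) x1 * x1 - (starRingEnd ℂ) y1 * y1)
        * ((starRingEnd ℂ) x1 * y1 - x1 * (starRingEnd ℂ) y1) := by
    linear_combination ((starRingEnd ℂ) x1 * y1 - x1 * (starRingEnd ℂ) y1) * hF3c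
      - (starRingEnd ℂ) y1 * y1 * hF1c + y1 * (starRingEnd ℂ) y1 * hF1
  have hI2 : (b2 * (starRingEnd ℂ) x2 - a2 * (starRingEnd ℂ) y2) * ((starRingEnd ℂ) b2 * y2)
      - ((starRingEnd ℂ) b2 * x2 - (starRingEnd ℂ) a2 * y2) * (b2 * (starRingEnd ℂ) y2)
      = ((starRingEnd ℂ) x2 * x2 - (starRingEnd ℂ) y2 * y2)
        * ((starRingEnd ℂ) x2 * y2 - x2 * (starRingEnd ℂ) y2) := by
    linear_combination ((starRingEnd ℂ) x2 * y2 - x2 * (starRingEnd ℂ) y2) * hG3c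
      - (starRingEnd ℂ) y2 * y2 * hG1c + y2 * (starRingEnd ℂ) y2 * hG1
  have hfinal : 2 * (c : ℂ) * (((starRingEnd ℂ) x1 * x1 - (starRingEnd ℂ) y1 * y1) ^ 2
      + 4 * ((starRingEnd ℂ) b1 * y1 * (b1 * (starRingEnd ℂ) y1))) = 0 := by
    linear_combination (-(b1 * (starRingEnd ℂ) y1)) * hE + (-((starRingEnd ℂ) b1 * y1)) * hEc
      + ((starRingEnd ℂ) x1 * x1 - (starRingEnd ℂ) y1 * y1) * hm
      - (s : ℂ) * Complex.I * hI1 - (s : ℂ) * Complex.I * hI2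
      + (s : ℂ) * Complex.I * (b2 * (starRingEnd ℂ) x2 - a2 * (starRingEnd ℂ) y2) * hT
      - (s : ℂ) * Complex.I * ((starRingEnd ℂ) b2 * x2 - (starRingEnd ℂ) a2 * y2) * hTc
      - (s : ℂ) * Complex.I * ((starRingEnd ℂ) x2 * y2 - x2 * (starRingEnd ℂ) y2) * hd
  -- pass to real numbers
  have e1 : (starRingEnd ℂ) x1 * x1 - (starRingEnd ℂ) y1 * y1
      = ((Complex.normSq x1 - Complex.normSq y1 : ℝ) : ℂ) := by
    rw [cms, cms]; push_cast; ring
  have e2 : (starRingEnd ℂ) b1 * y1 * (b1 * (starRingEnd ℂ) y1)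
      = ((Complex.normSq ((starRingEnd ℂ) b1 * y1) : ℝ) : ℂ) := by
    rw [← Complex.mul_conj ((starRingEnd ℂ) b1 * y1), _root_.map_mul, Complex.conj_conj]
  rw [e1, e2] at hfinal
  have hreal : 2 * c * ((Complex.normSq x1 - Complex.normSq y1) ^ 2
      + 4 * Complex.normSq ((starRingEnd ℂ) b1 * y1)) = 0 := by exact_mod_cast hfinal
  have hAB : (Complex.normSq x1 - Complex.normSq y1) ^ 2
      + 4 * Complex.normSq ((starRingEnd ℂ) b1 * y1) = 0 := by
    rcases mul_eq_zero.mp hreal with h | h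
    · nlinarith
    · exact h
  have hB0 : Complex.normSq ((starRingEnd ℂ) b1 * y1) = 0 := by
    nlinarith [sq_nonneg (Complex.normSq x1 - Complex.normSq y1),
      Complex.normSq_nonneg ((starRingEnd ℂ) b1 * y1)]
  have hA0 : Complex.normSq x1 = Complex.normSq y1 := by
    nlinarith [sq_nonneg (Complex.normSq x1 - Complex.normSq y1),
      Complex.normSq_nonneg ((starRingEnd ℂ) b1 * y1)]
  -- block 1 vanishes
  have hx1n : Complex.normSq x1 = 0 := by
    have h5 : Complex.normSq b1 * Complex.normSq y1 = 0 := by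
      rw [← Complex.normSq_mul]
      simpa [Complex.normSq_conj] using hB0
    rw [hF3, hA0] at h5
    have := mul_self_eq_zero.mp (by linarith [h5] : Complex.normSq y1 * Complex.normSq y1 = 0)
    rw [hA0]; exact this
  have hy1n : Complex.normSq y1 = 0 := by rw [← hA0]; exact hx1n
  -- block 2
  have hB0' : Complex.normSq ((starRingEnd ℂ) b2 * y2) = 0 := by rw [hT]; exact hB0
  have hd' : Complex.normSq x2 - Complex.normSq y2
      = Complex.normSq x1 - Complex.normSq y1 := by
    have := hd
    rw [cms, cms, cms, cms] at this
    exact_mod_cast this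
  have hA0' : Complex.normSq x2 = Complex.normSq y2 := by
    rw [hx1n, hy1n] at hd'; linarith
  have hx2n : Complex.normSq x2 = 0 := by
    have h5 : Complex.normSq b2 * Complex.normSq y2 = 0 := by
      rw [← Complex.normSq_mul]
      simpa [Complex.normSq_conj] using hB0'
    rw [hG3, hA0'] at h5
    have := mul_self_eq_zero.mp (by linarith [h5] : Complex.normSq y2 * Complex.normSq y2 = 0)
    rw [hA0']; exact this
  have hy2n : Complex.normSq y2 = 0 := by rw [← hA0']; exact hx2n
  exact ⟨Complex.normSq_eq_zero.mp hx1n, Complex.normSq_eq_zero.mp hy1n,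
    Complex.normSq_eq_zero.mp hx2n, Complex.normSq_eq_zero.mp hy2n⟩

theorem stmt_8 (θ : ℝ) (hθ : θ ∈ Set.Ioc (-Real.pi) Real.pi) (hne : θ ≠ Real.pi) :
    ¬ ∃ φ ψ : Fin 4 → ℂ, (∑ i, ‖φ i‖ ^ 2 = 1) ∧ (∑ i, ‖ψ i‖ ^ 2 = 1) ∧
      ∀ M ∈ Lset θ, star ψ ⬝ᵥ M.mulVec φ = 0 ∧
        star φ ⬝ᵥ M.mulVec φ = star ψ ⬝ᵥ M.mulVec ψ := by
  rintro ⟨φ, ψ, hφ, hψ, h⟩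
  have hπ : θ < Real.pi := lt_of_le_of_ne hθ.2 hne
  have hc : 0 < Real.cos (θ / 2) := by
    apply Real.cos_pos_of_mem_Ioo
    constructor
    · have := hθ.1; linarith
    · linarith
  have hγ : Complex.exp (Complex.I * θ / 2)
      = ((Real.cos (θ / 2) : ℝ) : ℂ) + ((Real.sin (θ / 2) : ℝ) : ℂ) * Complex.I := by
    rw [Complex.ofReal_cos, Complex.ofReal_sin, ← Complex.exp_mul_I]
    congr 1
    push_cast
    ring
  have key : ∀ (a b cc d : ℂ) (u v : Fin 4 → ℂ),
      star u ⬝ᵥ (!![a, b, Complex.exp (Complex.I * θ / 2) * cc, d;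
           b, a, d, (starRingEnd ℂ) (Complex.exp (Complex.I * θ / 2)) * cc;
           (starRingEnd ℂ) (Complex.exp (Complex.I * θ / 2)) * cc, d, a, b;
           d, Complex.exp (Complex.I * θ / 2) * cc, b, a] : Matrix (Fin 4) (Fin 4) ℂ).mulVec v
      = (starRingEnd ℂ) (u 0) * (a * v 0 + b * v 1 + Complex.exp (Complex.I * θ / 2) * cc * v 2 + d * v 3)
      + (starRingEnd ℂ) (u 1) * (b * v 0 + a * v 1 + d * v 2 + (starRingEnd ℂ) (Complex.exp (Complex.I * θ / 2)) * cc * v 3)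
      + (starRingEnd ℂ) (u 2) * ((starRingEnd ℂ) (Complex.exp (Complex.I * θ / 2)) * cc * v 0 + d * v 1 + a * v 2 + b * v 3)
      + (starRingEnd ℂ) (u 3) * (d * v 0 + Complex.exp (Complex.I * θ / 2) * cc * v 1 + b * v 2 + a * v 3) := by
    intro a b cc d u v
    simp [Matrix.mulVec, dotProduct, Fin.sum_univ_four, Complex.star_def]
  obtain ⟨oI, dI⟩ := h _ ⟨1, 0, 0, 0, rfl⟩
  obtain ⟨oB, dB⟩ := h _ ⟨0, 1, 0, 0, rfl⟩
  obtain ⟨oC, dC⟩ := h _ ⟨0, 0, 1, 0, rfl⟩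
  obtain ⟨oD, dD⟩ := h _ ⟨0, 0, 0, 1, rfl⟩
  rw [key] at oI oB oC oD
  rw [key, key] at dI dB dC dD
  rw [hγ] at oC dC
  simp only [map_add, _root_.map_mul, Complex.conj_ofReal, Complex.conj_I] at oC dC
  obtain ⟨hx1, hy1, hx2, hy2⟩ := core (Real.cos (θ / 2)) (Real.sin (θ / 2)) hc
    (φ 0 + φ 1 + φ 2 + φ 3) (φ 0 - φ 1 - φ 2 + φ 3)
    (φ 0 - φ 1 + φ 2 - φ 3) (φ 0 + φ 1 - φ 2 - φ 3)
    (ψ 0 + ψ 1 + ψ 2 + ψ 3) (ψ 0 - ψ 1 - ψ 2 + ψ 3)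
    (ψ 0 - ψ 1 + ψ 2 - ψ 3) (ψ 0 + ψ 1 - ψ 2 - ψ 3)
    (by simp only [map_add, map_sub]; linear_combination (4 : ℂ) * oI)
    (by simp only [map_add, map_sub]; linear_combination (4 : ℂ) * oD)
    (by simp only [map_add, map_sub]; linear_combination (4 : ℂ) * oB)
    (by simp only [map_add, map_sub]; linear_combination (4 : ℂ) * oC)
    (by simp only [map_add, map_sub]; linear_combination (4 : ℂ) * dI)
    (by simp only [map_add, map_sub]; linear_combination (4 : ℂ) * dD)
    (by simp only [map_add, map_sub]; linear_combination (4 : ℂ) * dB)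
    (by simp only [map_add, map_sub]; linear_combination (4 : ℂ) * dC)
  have f0 : φ 0 = 0 := by linear_combination (hx1 + hy1 + hx2 + hy2) / 4
  have f1 : φ 1 = 0 := by linear_combination (hx1 - hy1 - hx2 + hy2) / 4
  have f2 : φ 2 = 0 := by linear_combination (hx1 - hy1 + hx2 - hy2) / 4
  have f3 : φ 3 = 0 := by linear_combination (hx1 + hy1 - hx2 - hy2) / 4
  rw [Fin.sum_univ_four, f0, f1, f2, f3] at hφ
  norm_num at hφ
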